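/- There is a universal constant C > 0 such that the following holds. Let M ⊆ ℝ^d be bounded and ε > 0. For every β > 1, the ball carving partition Π of M with parameter ε is (ε, β, C·(dd(M,ε)+1)/β)-padded: every block has diameter ≤ ε, and for every x ∈ M, ℙ_{R,σ}[ B_{ε/β}(x) ∩ M ⊄ Π(x) ] ≤ C·(dd(M,ε)+1)/β, where dd(M,ε) is the ε-doubling dimension of M with the ℓ₂ metric inherited from ℝ^d. -/

import Mathlib

open MeasureTheory Metric Set
open scoped ENNReal NNReal

noncomputable section

/-- The Euclidean space `ℝ^d` with the `ℓ₂` metric. -/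
abbrev Euc (d : ℕ) := EuclideanSpace ℝ (Fin d)

/-- The doubling constant of a metric space at scale `ε`: the smallest `λ : ℕ`
such that every ball of radius at most `ε` can be covered by `λ` balls of half
the radius. -/
def doublingConstant (M : Type*) [PseudoMetricSpace M] (ε : ℝ) : ℕ :=
  sInf {l : ℕ | ∀ (x : M) (r : ℝ), 0 < r → r ≤ ε →
    ∃ T : Finset M, T.card ≤ l ∧ ball x r ⊆ ⋃ y ∈ T, ball y (r / 2)}

/-- The `ε`-doubling dimension `dd(M,ε) = log₂ λ` of a metric space. -/
def ddim (M : Type*) [PseudoMetricSpace M] (ε : ℝ) : ℝ :=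
  Real.logb 2 (doublingConstant M ε)

/-- The block `Π̂(uᵢ) = B_R(uᵢ) \ ⋃_{j : σ(j) < σ(i)} B_R(uⱼ)` of the ball
carving partition built from the net `u`, radius `R` and order `σ`. -/
def carvBlock {d n : ℕ} (u : Fin n → Euc d) (R : ℝ) (σ : Equiv.Perm (Fin n))
    (i : Fin n) : Set (Euc d) :=
  ball (u i) R \ ⋃ j ∈ {j | σ j < σ i}, ball (u j) R

/-- The uniform probability measure on the interval `Ioc a b`. -/
def unifIoc (a b : ℝ) : Measure ℝ :=
  (volume (Set.Ioc a b))⁻¹ • volume.restrict (Set.Ioc a b)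

instance (n : ℕ) : MeasurableSpace (Equiv.Perm (Fin n)) := ⊤

/-- The uniform probability measure on permutations of `Fin n` (a uniformly
random linear order of the net). -/
def unifPerm (n : ℕ) : Measure (Equiv.Perm (Fin n)) :=
  (Measure.count (Set.univ : Set (Equiv.Perm (Fin n))))⁻¹ • Measure.count

/-- The joint distribution of the randomness `(R, σ)` of the ball carving
partition with parameter `ε`. -/
def carvMeasure (ε : ℝ) (n : ℕ) : Measure (ℝ × Equiv.Perm (Fin n)) :=
  (unifIoc (ε / 4) (ε / 2)).prod (unifPerm n)



/-- Harmonic sum bound. -/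
lemma harm_le_log (m : ℕ) (hm : 1 ≤ m) :
    ∑ i ∈ Finset.range m, (1:ℝ)/(i+1) ≤ 1 + Real.log m := by
  induction m with
  | zero => omega
  | succ m ih =>
    rcases Nat.eq_or_lt_of_le hm with h | h
    · simp [← h]
    · have hm1 : 1 ≤ m := by omega
      have hmpos : (0:ℝ) < m := by exact_mod_cast hm1
      have key : (1:ℝ)/(m+1) ≤ Real.log (m+1) - Real.log m := by
        have h1 : Real.log ((m:ℝ)/(m+1)) ≤ (m:ℝ)/(m+1) - 1 :=
          Real.log_le_sub_one_of_pos (by positivity)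
        have h2 : Real.log ((m:ℝ)/(m+1)) = Real.log m - Real.log (m+1) :=
          Real.log_div (ne_of_gt hmpos) (by positivity)
        have h3 : (m:ℝ)/(m+1) - 1 = -(1/(m+1)) := by field_simp; ring
        rw [h2, h3] at h1
        linarith
      rw [Finset.sum_range_succ]
      have := ih hm1
      push_cast
      push_cast at this key
      linarith

/-- If the fibers `{k ∈ K : f k ≤ r}` have at most `r` elements, the sum of
`1/f k` is at most the harmonic number `H_{|K|}`. -/
lemma sum_inv_le_harm {ι : Type*} [DecidableEq ι] (K : Finset ι) (f : ι → ℕ)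
    (hfib : ∀ r : ℕ, (K.filter fun k => f k ≤ r).card ≤ r) :
    ∑ k ∈ K, (1:ℝ)/(f k) ≤ ∑ i ∈ Finset.range K.card, (1:ℝ)/(i+1) := by
  suffices H : ∀ (m : ℕ) (K : Finset ι), (∀ r : ℕ, (K.filter fun k => f k ≤ r).card ≤ r) →
      K.card = m → ∑ k ∈ K, (1:ℝ)/(f k) ≤ ∑ i ∈ Finset.range K.card, (1:ℝ)/(i+1) by
    exact H K.card K hfib rfl
  intro m
  induction m with
  | zero =>
    intro K hfib hn
    rw [Finset.card_eq_zero] at hn; simp [hn]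
  | succ m ih =>
    intro K hfib hn
    have hKne : K.Nonempty := by
      rw [← Finset.card_pos, hn]; omega
    obtain ⟨k0, hk0, hmax⟩ := Finset.exists_max_image K f hKne
    have hfk0 : m + 1 ≤ f k0 := by
      have : K ⊆ K.filter fun k => f k ≤ f k0 := by
        intro k hk; simp [hk, hmax k hk]
      have := (Finset.card_le_card this).trans (hfib (f k0))
      omega
    have hcard : (K.erase k0).card = m := by
      rw [Finset.card_erase_of_mem hk0, hn]; omega
    have hrec := ih (K.erase k0) (fun r => le_trans
      (Finset.card_le_card (Finset.filter_subset_filter _ (Finset.erase_subset _ _))) (hfib r)) hcard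
    rw [hcard] at hrec
    rw [hn]
    have hsplit : ∑ k ∈ K, (1:ℝ)/(f k) = (∑ k ∈ K.erase k0, (1:ℝ)/(f k)) + 1/(f k0) := by
      rw [Finset.sum_erase_add K _ hk0]
    rw [hsplit, Finset.sum_range_succ]
    have : (1:ℝ)/(f k0) ≤ 1/(m+1) := by
      apply one_div_le_one_div_of_le (by positivity)
      exact_mod_cast hfk0
    push_cast at this ⊢
    linarith



/-- The number of permutations for which `k` is first among `S` is at most `n!/|S|`. -/
lemma perm_min_count {n : ℕ} (S : Finset (Fin n)) (k : Fin n) (hk : k ∈ S) :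
    ((Finset.univ : Finset (Equiv.Perm (Fin n))).filter
        (fun σ => ∀ j ∈ S, σ k ≤ σ j)).card * S.card
      ≤ Fintype.card (Equiv.Perm (Fin n)) := by
  classical
  set B : Fin n → Finset (Equiv.Perm (Fin n)) :=
    fun j => Finset.univ.filter (fun σ => ∀ i ∈ S, σ j ≤ σ i) with hB
  have hmem : ∀ (a b : Fin n), a ∈ S → b ∈ S → ∀ σ, σ ∈ B a → σ * Equiv.swap a b ∈ B b := by
    intro a b ha hb σ hσ
    simp only [hB, Finset.mem_filter, Finset.mem_univ, true_and] at hσ ⊢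
    intro i hi
    have hτb : (σ * Equiv.swap a b) b = σ a := by
      simp [Equiv.Perm.mul_apply]
    rw [hτb]
    rcases eq_or_ne i b with hib' | hib
    · rw [hib', hτb]
    · rcases eq_or_ne i a with hia' | hia
      · have h2 : (σ * Equiv.swap a b) i = σ b := by
          rw [hia', Equiv.Perm.mul_apply, Equiv.swap_apply_left]
        rw [h2]; exact hσ b hb
      · have h2 : (σ * Equiv.swap a b) i = σ i := by
          rw [Equiv.Perm.mul_apply, Equiv.swap_apply_of_ne_of_ne hia hib]
        rw [h2]; exact hσ i hi
  have hcards : ∀ j ∈ S, (B j).card = (B k).card := by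
    intro j hj
    refine (Finset.card_nbij (fun σ => σ * Equiv.swap k j)
      (fun σ hσ => hmem k j hk hj σ hσ) (fun a _ b _ hab => mul_right_cancel hab) ?_).symm
    intro τ hτ
    refine ⟨τ * Equiv.swap k j, ?_, by
      simp only [Function.comp]
      rw [mul_assoc, Equiv.swap_mul_self, mul_one]⟩
    have := hmem j k hj hk τ (Finset.mem_coe.mp hτ)
    rw [Equiv.swap_comm] at this
    exact Finset.mem_coe.mpr this
  have hdisj : (S : Set (Fin n)).PairwiseDisjoint B := by
    intro a ha b hb hab
    simp only [Finset.disjoint_left]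
    intro σ hσa hσb
    simp only [hB, Finset.mem_filter] at hσa hσb
    exact hab (σ.injective (le_antisymm (hσa.2 b hb) (hσb.2 a ha)))
  have hsum : ∑ j ∈ S, (B j).card = (S.biUnion B).card :=
    (Finset.card_biUnion hdisj).symm
  have hconst : ∑ j ∈ S, (B j).card = (B k).card * S.card := by
    rw [Finset.sum_congr rfl hcards, Finset.sum_const, smul_eq_mul, mul_comm]
  calc (B k).card * S.card = (S.biUnion B).card := by rw [← hconst, hsum]
    _ ≤ Fintype.card (Equiv.Perm (Fin n)) := Finset.card_le_univ _

instance (n : ℕ) : MeasurableSingletonClass (Equiv.Perm (Fin n)) := ⟨fun _ => trivial⟩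

lemma count_univ_perm (n : ℕ) : Measure.count (Set.univ : Set (Equiv.Perm (Fin n)))
    = (Fintype.card (Equiv.Perm (Fin n)) : ℝ≥0∞) := by
  rw [Measure.count_apply_finite _ Set.finite_univ]
  congr 1
  simp

lemma unifIoc_prob {ε : ℝ} (hε : 0 < ε) : IsProbabilityMeasure (unifIoc (ε/4) (ε/2)) := by
  constructor
  rw [unifIoc, Measure.smul_apply, smul_eq_mul, Measure.restrict_apply_univ, Real.volume_Ioc]
  rw [ENNReal.inv_mul_cancel]
  · simp only [ne_eq, ENNReal.ofReal_eq_zero, not_le]; linarith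
  · exact ENNReal.ofReal_ne_top

lemma unifPerm_prob (n : ℕ) : IsProbabilityMeasure (unifPerm n) := by
  constructor
  rw [unifPerm, Measure.smul_apply, smul_eq_mul, ENNReal.inv_mul_cancel]
  · rw [count_univ_perm]
    exact Nat.cast_ne_zero.mpr Fintype.card_ne_zero
  · rw [count_univ_perm]; exact ENNReal.natCast_ne_top _

lemma unifIoc_Ioc_le {ε : ℝ} (hε : 0 < ε) (a b : ℝ) :
    unifIoc (ε/4) (ε/2) (Set.Ioc a b) ≤ (ENNReal.ofReal (ε/4))⁻¹ * ENNReal.ofReal (b - a) := by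
  rw [unifIoc, Measure.smul_apply, smul_eq_mul, Measure.restrict_apply measurableSet_Ioc,
    Real.volume_Ioc]
  have h1 : ε/2 - ε/4 = ε/4 := by ring
  rw [h1]
  exact mul_le_mul_right (by
    calc volume (Set.Ioc a b ∩ Set.Ioc (ε/4) (ε/2)) ≤ volume (Set.Ioc a b) :=
          measure_mono Set.inter_subset_left
      _ = ENNReal.ofReal (b - a) := Real.volume_Ioc) _

lemma unifPerm_min_le {n : ℕ} (S : Finset (Fin n)) (k : Fin n) (hk : k ∈ S) :
    unifPerm n {σ | ∀ j ∈ S, σ k ≤ σ j} ≤ (S.card : ℝ≥0∞)⁻¹ := by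
  classical
  set A : Set (Equiv.Perm (Fin n)) := {σ | ∀ j ∈ S, σ k ≤ σ j} with hA
  have hfin : A.Finite := Set.toFinite _
  have hcard : hfin.toFinset.card * S.card ≤ Fintype.card (Equiv.Perm (Fin n)) := by
    have hEq : hfin.toFinset = Finset.univ.filter (fun σ => ∀ j ∈ S, σ k ≤ σ j) := by
      ext σ; simp [hA]
    rw [hEq]
    exact perm_min_count S k hk
  rw [unifPerm, Measure.smul_apply, smul_eq_mul, count_univ_perm,
    Measure.count_apply_finite _ hfin]
  rw [ENNReal.le_inv_iff_mul_le, mul_assoc]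
  have hle : (hfin.toFinset.card : ℝ≥0∞) * (S.card : ℝ≥0∞)
      ≤ (Fintype.card (Equiv.Perm (Fin n)) : ℝ≥0∞) := by exact_mod_cast hcard
  calc (Fintype.card (Equiv.Perm (Fin n)) : ℝ≥0∞)⁻¹ * ((hfin.toFinset.card : ℝ≥0∞) * S.card)
      ≤ (Fintype.card (Equiv.Perm (Fin n)) : ℝ≥0∞)⁻¹ * (Fintype.card (Equiv.Perm (Fin n))) :=
        mul_le_mul_right hle _
    _ = 1 := ENNReal.inv_mul_cancel (Nat.cast_ne_zero.mpr Fintype.card_ne_zero)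
        (ENNReal.natCast_ne_top _)

lemma cover_iter {X : Type*} [PseudoMetricSpace X] {l : ℕ} {ε : ℝ}
    (h : ∀ (x : X) (r : ℝ), 0 < r → r ≤ ε →
      ∃ T : Finset X, T.card ≤ l ∧ ball x r ⊆ ⋃ y ∈ T, ball y (r/2)) :
    ∀ (j : ℕ) (x : X) (r : ℝ), 0 < r → r ≤ ε →
      ∃ T : Finset X, T.card ≤ l^j ∧ ball x r ⊆ ⋃ y ∈ T, ball y (r/2^j) := by
  classical
  intro j
  induction j with
  | zero =>
    intro x r hr hrε
    exact ⟨{x}, by simp, by simp⟩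
  | succ j ih =>
    intro x r hr hrε
    obtain ⟨T, hTc, hTcov⟩ := h x r hr hrε
    choose! T2 hT2c hT2cov using fun (y : X) => ih y (r/2) (by positivity) (by linarith)
    refine ⟨T.biUnion T2, ?_, ?_⟩
    · calc (T.biUnion T2).card ≤ ∑ y ∈ T, (T2 y).card := Finset.card_biUnion_le
        _ ≤ ∑ _y ∈ T, l^j := Finset.sum_le_sum (fun y _ => hT2c y)
        _ = T.card * l^j := by rw [Finset.sum_const, smul_eq_mul]
        _ ≤ l * l^j := Nat.mul_le_mul_right _ hTc
        _ = l^(j+1) := by rw [pow_succ]; ring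
    · intro z hz
      obtain ⟨y, hyT, hzy⟩ := mem_iUnion₂.mp (hTcov hz)
      obtain ⟨w, hwT2, hzw⟩ := mem_iUnion₂.mp (hT2cov y hzy)
      refine mem_iUnion₂.mpr ⟨w, Finset.mem_biUnion.mpr ⟨y, hyT, hwT2⟩, ?_⟩
      have hrad : r/2/2^j = r/2^(j+1) := by
        rw [pow_succ]; ring
      rwa [hrad] at hzw

lemma doubling_nonempty {d : ℕ} (M : Set (Euc d)) (ε : ℝ) :
    {l : ℕ | ∀ (x : M) (r : ℝ), 0 < r → r ≤ ε →
      ∃ T : Finset M, T.card ≤ l ∧ ball x r ⊆ ⋃ y ∈ T, ball y (r / 2)}.Nonempty := by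
  classical
  have hcb : TotallyBounded (closedBall (0 : Euc d) 1) :=
    (isCompact_closedBall _ _).totallyBounded
  obtain ⟨F, hFf, hFcov⟩ := Metric.totallyBounded_iff.mp hcb (1/16) (by norm_num)
  refine ⟨hFf.toFinset.card, ?_⟩
  intro x r hr hrε
  set pick : Euc d → M := fun c =>
    if h : ∃ w : M, dist (w : Euc d) ((x : Euc d) + r • c) < r/16 then h.choose
    else x with hpick_def
  refine ⟨hFf.toFinset.image pick, Finset.card_image_le, ?_⟩
  intro z hz
  have hz' : dist (z : Euc d) (x : Euc d) < r := by
    rw [← Subtype.dist_eq]; exact mem_ball.mp hz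
  set v : Euc d := r⁻¹ • ((z : Euc d) - x) with hv
  have hvmem : v ∈ closedBall (0 : Euc d) 1 := by
    rw [mem_closedBall, dist_zero_right, hv, norm_smul, norm_inv, Real.norm_of_nonneg hr.le]
    rw [← dist_eq_norm]
    rw [inv_mul_le_iff₀ hr, mul_one]
    exact hz'.le
  obtain ⟨c, hcF, hvc⟩ := mem_iUnion₂.mp (hFcov hvmem)
  have hkey : dist (z : Euc d) ((x : Euc d) + r • c) < r/16 := by
    have hsmul : r • v = (z : Euc d) - x := by
      rw [hv, smul_inv_smul₀ (ne_of_gt hr)]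
    have heq : (z : Euc d) - ((x : Euc d) + r • c) = r • (v - c) := by
      rw [smul_sub, hsmul]; abel
    rw [dist_eq_norm, heq, norm_smul, Real.norm_of_nonneg hr.le]
    have : ‖v - c‖ < 1/16 := by rw [← dist_eq_norm]; exact mem_ball.mp hvc
    calc r * ‖v - c‖ < r * (1/16) := by
          exact mul_lt_mul_of_pos_left this hr
      _ = r/16 := by ring
  have hex : ∃ w : M, dist (w : Euc d) ((x : Euc d) + r • c) < r/16 := ⟨z, hkey⟩
  have hpick : dist ((pick c : M) : Euc d) ((x : Euc d) + r • c) < r/16 := by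
    rw [hpick_def]
    simp only [dif_pos hex]
    exact hex.choose_spec
  refine mem_iUnion₂.mpr ⟨pick c, Finset.mem_image_of_mem pick (hFf.mem_toFinset.mpr hcF), ?_⟩
  rw [mem_ball, Subtype.dist_eq]
  calc dist (z : Euc d) (pick c : Euc d)
      ≤ dist (z : Euc d) ((x : Euc d) + r • c) + dist ((x : Euc d) + r • c) (pick c : Euc d) :=
        dist_triangle _ _ _
    _ < r/16 + r/16 := by
        rw [dist_comm ((x : Euc d) + r • c)]
        exact add_lt_add hkey hpick
    _ ≤ r/2 := by linarith

/-- Lemma 4: there is a universal constant `C > 0` such that for every bounded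
`M ⊆ ℝ^d`, every `ε > 0` and every `β > 1`, the ball carving partition of `M`
with parameter `ε` (built from a finite `ε/4`-net `u : Fin n → ℝ^d` of `M`) is
`(ε, β, C·(dd(M,ε)+1)/β)`-padded: every block has diameter at most `ε`, and for
every `x ∈ M` the probability that `B_{ε/β}(x) ∩ M` is not contained in the
block of `x` is at most `C·(dd(M,ε)+1)/β`, where `dd(M,ε)` is the `ε`-doubling
dimension of `M` with the inherited `ℓ₂` metric. -/
theorem stmt9 : ∃ C : ℝ, 0 < C ∧
    ∀ (d n : ℕ) (M : Set (Euc d)), Bornology.IsBounded M →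
    ∀ (ε β : ℝ), 0 < ε → 1 < β →
    ∀ u : Fin n → Euc d, (∀ i, u i ∈ M) →
    (∀ i j, i ≠ j → ε / 4 ≤ dist (u i) (u j)) →
    M ⊆ (⋃ i, ball (u i) (ε / 4)) →
    ((∀ R ∈ Set.Ioc (ε / 4) (ε / 2), ∀ (σ : Equiv.Perm (Fin n)) (i : Fin n),
        EMetric.diam (carvBlock u R σ i) ≤ ENNReal.ofReal ε) ∧
      ∀ x ∈ M, carvMeasure ε n
          {p | ¬ ∃ i, ball x (ε / β) ∩ M ⊆ carvBlock u p.1 p.2 i} ≤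
        ENNReal.ofReal (C * (ddim M ε + 1) / β)) := by
  classical
  refine ⟨24, by norm_num, ?_⟩
  intro d n M hM ε β hε hβ u hu husep hunet
  constructor
  · -- diameter bound
    intro R hR σ i
    calc EMetric.diam (carvBlock u R σ i) ≤ EMetric.diam (ball (u i) R) :=
          EMetric.diam_mono Set.diff_subset
      _ ≤ 2 * ENNReal.ofReal R := by
          rw [← Metric.emetric_ball]; exact EMetric.diam_ball
      _ ≤ ENNReal.ofReal ε := by
          rw [show (2:ℝ≥0∞) = ENNReal.ofReal 2 by simp,
            ← ENNReal.ofReal_mul (by norm_num : (0:ℝ) ≤ 2)]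
          exact ENNReal.ofReal_le_ofReal (by linarith [hR.2])
  · intro x hx
    have hβ0 : (0:ℝ) < β := by linarith
    set t : ℝ := ε / β with ht_def
    have ht : 0 < t := by rw [ht_def]; positivity
    haveI hP1 : IsProbabilityMeasure (unifIoc (ε/4) (ε/2)) := unifIoc_prob hε
    haveI hP2 : IsProbabilityMeasure (unifPerm n) := unifPerm_prob n
    have hcov : ∀ (y : ↥M) (r : ℝ), 0 < r → r ≤ ε →
        ∃ T : Finset ↥M, T.card ≤ doublingConstant ↥M ε ∧
          ball y r ⊆ ⋃ z ∈ T, ball z (r / 2) :=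
      Nat.sInf_mem (doubling_nonempty M ε)
    set l : ℕ := doublingConstant ↥M ε with hl_def
    have hl1 : 1 ≤ l := by
      rcases Nat.eq_zero_or_pos l with h0 | h
      · exfalso
        obtain ⟨T, hTc, hTsub⟩ := hcov ⟨x, hx⟩ ε hε le_rfl
        rw [h0, Nat.le_zero, Finset.card_eq_zero] at hTc
        have := hTsub (mem_ball_self hε)
        rw [hTc] at this
        simpa using this
      · exact h
    have hddeq : ddim ↥M ε = Real.logb 2 (l : ℝ) := rfl
    have hdd0 : 0 ≤ ddim ↥M ε := by
      rw [hddeq]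
      exact Real.logb_nonneg (by norm_num) (by exact_mod_cast hl1)
    by_cases hβ24 : β ≤ 24
    · -- trivial case: the bound is at least 1
      have huniv : carvMeasure ε n (Set.univ : Set (ℝ × Equiv.Perm (Fin n))) = 1 := by
        rw [carvMeasure, ← Set.univ_prod_univ, Measure.prod_prod, measure_univ, measure_univ,
          mul_one]
      refine le_trans (le_trans (measure_mono (Set.subset_univ _)) (le_of_eq huniv)) ?_
      rw [show (1:ℝ≥0∞) = ENNReal.ofReal 1 by simp]
      apply ENNReal.ofReal_le_ofReal
      rw [le_div_iff₀ hβ0]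
      nlinarith [hdd0]
    · push_neg at hβ24
      have htε : t < ε/24 := by
        rw [ht_def]
        exact div_lt_div_of_pos_left hε (by norm_num) hβ24
      set g : Fin n → ℝ := fun k => Metric.infDist (u k) (ball x t ∩ M) with hg_def
      have hBmem : x ∈ ball x t ∩ M := ⟨mem_ball_self ht, hx⟩
      have hBne : (ball x t ∩ M).Nonempty := ⟨x, hBmem⟩
      have hgle : ∀ k, g k ≤ dist (u k) x := fun k => Metric.infDist_le_dist_of_mem hBmem
      have hgge : ∀ k, dist (u k) x - t ≤ g k := by
        intro k
        by_contra hcon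
        push_neg at hcon
        obtain ⟨y, hy, hyd⟩ := (Metric.infDist_lt_iff hBne).mp hcon
        have h1 : dist y x < t := mem_ball.mp hy.1
        have h2 : dist (u k) x ≤ dist (u k) y + dist y x := dist_triangle _ _ _
        linarith
      set S : Fin n → Finset (Fin n) := fun k => Finset.univ.filter (fun j => g j ≤ g k)
        with hS_def
      have hkS : ∀ k, k ∈ S k := fun k => by simp [hS_def]
      have hSpos : ∀ k, 0 < (S k).card := fun k => Finset.card_pos.mpr ⟨k, hkS k⟩
      set K : Finset (Fin n) := Finset.univ.filter (fun k => g k < ε/2) with hK_def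
      -- the deterministic core of the argument
      have key : ∀ R, R ∈ Set.Ioc (ε/4) (ε/2) → ∀ σ : Equiv.Perm (Fin n),
          (¬ ∃ i, ball x t ∩ M ⊆ carvBlock u R σ i) →
          ∃ k ∈ K, (R ∈ Set.Ioc (g k) (dist (u k) x + t) ∧ ∀ j ∈ S k, σ k ≤ σ j) := by
        intro R hR σ hfail
        set J : Finset (Fin n) := Finset.univ.filter (fun j => g j < R) with hJ_def
        have hJne : J.Nonempty := by
          obtain ⟨i0, hi0⟩ := mem_iUnion.mp (hunet hx)
          refine ⟨i0, ?_⟩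
          simp only [hJ_def, Finset.mem_filter, Finset.mem_univ, true_and]
          have h1 : g i0 ≤ dist (u i0) x := hgle i0
          have h2 : dist x (u i0) < ε/4 := mem_ball.mp hi0
          rw [dist_comm] at h2
          linarith [hR.1]
        obtain ⟨k, hkJ, hkmin⟩ := Finset.exists_min_image J (fun j => σ j) hJne
        have hgkR : g k < R := by
          have := Finset.mem_filter.mp hkJ
          simpa using this.2
        have hup : R ≤ dist (u k) x + t := by
          by_contra hcon
          push_neg at hcon
          apply hfail
          refine ⟨k, ?_⟩
          intro y hy
          constructor
          · rw [mem_ball]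
            have h1 : dist y (u k) ≤ dist y x + dist x (u k) := dist_triangle _ _ _
            have h2 : dist y x < t := mem_ball.mp hy.1
            rw [dist_comm x (u k)] at h1
            linarith
          · intro hmem
            obtain ⟨j, hj, hyj⟩ := mem_iUnion₂.mp hmem
            have hjJ : j ∈ J := by
              simp only [hJ_def, Finset.mem_filter, Finset.mem_univ, true_and]
              calc g j ≤ dist (u j) y := Metric.infDist_le_dist_of_mem hy
                _ < R := by rw [dist_comm]; exact mem_ball.mp hyj
            exact absurd (hkmin j hjJ) (not_le.mpr hj)
        refine ⟨k, ?_, ⟨hgkR, hup⟩, ?_⟩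
        · simp only [hK_def, Finset.mem_filter, Finset.mem_univ, true_and]
          exact lt_of_lt_of_le hgkR hR.2
        · intro j hj
          have hgj : g j ≤ g k := by
            have := Finset.mem_filter.mp hj
            simpa [hS_def] using this.2
          have hjJ : j ∈ J := by
            simp only [hJ_def, Finset.mem_filter, Finset.mem_univ, true_and]
            exact lt_of_le_of_lt hgj hgkR
          exact hkmin j hjJ
      set A : Fin n → Set (ℝ × Equiv.Perm (Fin n)) := fun k =>
        (Set.Ioc (g k) (dist (u k) x + t)) ×ˢ
          {σ : Equiv.Perm (Fin n) | ∀ j ∈ S k, σ k ≤ σ j} with hA_def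
      have hEsub : {p : ℝ × Equiv.Perm (Fin n) | ¬ ∃ i, ball x t ∩ M ⊆ carvBlock u p.1 p.2 i}
          ⊆ ((Set.Ioc (ε/4) (ε/2))ᶜ ×ˢ (Set.univ : Set (Equiv.Perm (Fin n)))) ∪
            ⋃ k ∈ K, A k := by
        rintro ⟨R, σ⟩ hp
        by_cases hR : R ∈ Set.Ioc (ε/4) (ε/2)
        · right
          obtain ⟨k, hkK, hRk, hσk⟩ := key R hR σ hp
          exact mem_iUnion₂.mpr ⟨k, hkK, ⟨hRk, hσk⟩⟩
        · exact Or.inl ⟨hR, trivial⟩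
      have hzero : carvMeasure ε n
          (((Set.Ioc (ε/4) (ε/2))ᶜ) ×ˢ (Set.univ : Set (Equiv.Perm (Fin n)))) = 0 := by
        rw [carvMeasure, Measure.prod_prod]
        have h0 : unifIoc (ε/4) (ε/2) ((Set.Ioc (ε/4) (ε/2))ᶜ) = 0 := by
          rw [unifIoc, Measure.smul_apply, smul_eq_mul,
            Measure.restrict_apply measurableSet_Ioc.compl, Set.compl_inter_self]
          simp
        rw [h0, zero_mul]
      have hAk : ∀ k ∈ K, carvMeasure ε n (A k) ≤
          ENNReal.ofReal (8/β) * ((S k).card : ℝ≥0∞)⁻¹ := by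
        intro k _
        have h1 := unifIoc_Ioc_le hε (g k) (dist (u k) x + t)
        have h2 := unifPerm_min_le (S k) k (hkS k)
        calc carvMeasure ε n (A k)
            = unifIoc (ε/4) (ε/2) (Set.Ioc (g k) (dist (u k) x + t)) *
              unifPerm n {σ : Equiv.Perm (Fin n) | ∀ j ∈ S k, σ k ≤ σ j} := by
              rw [hA_def, carvMeasure, Measure.prod_prod]
          _ ≤ ((ENNReal.ofReal (ε/4))⁻¹ * ENNReal.ofReal (dist (u k) x + t - g k)) *
              ((S k).card : ℝ≥0∞)⁻¹ := mul_le_mul' h1 h2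
          _ ≤ ENNReal.ofReal (8/β) * ((S k).card : ℝ≥0∞)⁻¹ := by
              apply mul_le_mul_left
              calc (ENNReal.ofReal (ε/4))⁻¹ * ENNReal.ofReal (dist (u k) x + t - g k)
                  ≤ (ENNReal.ofReal (ε/4))⁻¹ * ENNReal.ofReal (2*t) :=
                    mul_le_mul_right (ENNReal.ofReal_le_ofReal (by linarith [hgge k])) _
                _ = ENNReal.ofReal (8/β) := by
                    rw [← ENNReal.ofReal_inv_of_pos (by linarith : (0:ℝ) < ε/4),
                      ← ENNReal.ofReal_mul (by positivity)]
                    congr 1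
                    rw [ht_def]
                    field_simp
                    ring
      -- counting: K has at most l^3 elements
      have hKl : K.card ≤ l^3 := by
        obtain ⟨T, hTc, hTcov⟩ := cover_iter hcov 3 ⟨x, hx⟩ ε hε le_rfl
        haveI : Nonempty ↥M := ⟨⟨x, hx⟩⟩
        have hsel : ∀ k ∈ K, ∃ y : ↥M, y ∈ T ∧ (⟨u k, hu k⟩ : ↥M) ∈ ball y (ε/2^3) := by
          intro k hk
          have h2 : g k < ε/2 := by
            have := Finset.mem_filter.mp hk
            simpa [hK_def] using this.2
          have hkd : dist (u k) x < ε := by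
            have h1 := hgge k
            linarith
          have hmem : (⟨u k, hu k⟩ : ↥M) ∈ ball (⟨x, hx⟩ : ↥M) ε := by
            rw [mem_ball, Subtype.dist_eq]
            exact hkd
          obtain ⟨y, hyT, hy⟩ := mem_iUnion₂.mp (hTcov hmem)
          exact ⟨y, hyT, hy⟩
        choose! sel hsel1 hsel2 using hsel
        refine le_trans (Finset.card_le_card_of_injOn sel hsel1 ?_) hTc
        intro k hk k' hk' heq
        by_contra hne
        have h1 := hsel2 k (Finset.mem_coe.mp hk)
        have h2 := hsel2 k' (Finset.mem_coe.mp hk')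
        rw [heq] at h1
        have d1 : dist (u k) ((sel k' : ↥M) : Euc d) < ε/2^3 := by
          have := mem_ball.mp h1
          rwa [Subtype.dist_eq] at this
        have d2 : dist (u k') ((sel k' : ↥M) : Euc d) < ε/2^3 := by
          have := mem_ball.mp h2
          rwa [Subtype.dist_eq] at this
        have htri : dist (u k) (u k') ≤
            dist (u k) ((sel k' : ↥M) : Euc d) + dist ((sel k' : ↥M) : Euc d) (u k') :=
          dist_triangle _ _ _
        rw [dist_comm ((sel k' : ↥M) : Euc d) (u k')] at htri
        have hd : dist (u k) (u k') < ε/4 := by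
          have he : ε/2^3 = ε/8 := by norm_num
          rw [he] at d1 d2
          linarith
        exact absurd hd (not_lt.mpr (husep k k' hne))
      -- the sum of 1/|S k| over K is at most 3·(dd+1)
      have hsum : ∑ k ∈ K, ((S k).card : ℝ≥0∞)⁻¹ ≤
          ENNReal.ofReal (3*(ddim ↥M ε + 1)) := by
        have hcast : ∀ k ∈ K, ((S k).card : ℝ≥0∞)⁻¹ =
            ENNReal.ofReal (1/((S k).card : ℝ)) := by
          intro k _
          rw [one_div, ENNReal.ofReal_inv_of_pos (by exact_mod_cast hSpos k),
            ENNReal.ofReal_natCast]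
        rw [Finset.sum_congr rfl hcast,
          ← ENNReal.ofReal_sum_of_nonneg (fun k _ => by positivity)]
        apply ENNReal.ofReal_le_ofReal
        have hfib : ∀ r : ℕ, (K.filter fun k => (S k).card ≤ r).card ≤ r := by
          intro r
          rcases Finset.eq_empty_or_nonempty (K.filter fun k => (S k).card ≤ r) with he | hne
          · rw [he]; simp
          · obtain ⟨k0, hk0, hmax⟩ := Finset.exists_max_image _ g hne
            have hsub : (K.filter fun k => (S k).card ≤ r) ⊆ S k0 := by
              intro j hj
              simp only [hS_def, Finset.mem_filter, Finset.mem_univ, true_and]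
              exact hmax j hj
            have hk0r : (S k0).card ≤ r := (Finset.mem_filter.mp hk0).2
            exact le_trans (Finset.card_le_card hsub) hk0r
        have hharm := sum_inv_le_harm K (fun k => (S k).card) hfib
        rcases Finset.eq_empty_or_nonempty K with hKe | hKne
        · rw [hKe]
          simp only [Finset.sum_empty]
          nlinarith [hdd0]
        · have hK1 : 1 ≤ K.card := Finset.card_pos.mpr hKne
          have hlog := harm_le_log K.card hK1
          have hKcast : (1:ℝ) ≤ (K.card : ℝ) := by exact_mod_cast hK1
          have hKlcast : (K.card : ℝ) ≤ ((l:ℝ))^3 := by exact_mod_cast hKl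
          have h1 : Real.log (K.card : ℝ) ≤ Real.log ((l:ℝ)^3) :=
            Real.log_le_log (by linarith) hKlcast
          have h2 : Real.log ((l:ℝ)^3) = 3 * Real.log (l:ℝ) := by
            rw [Real.log_pow]; norm_num
          have hl0 : (1:ℝ) ≤ (l:ℝ) := by exact_mod_cast hl1
          have hlogl : 0 ≤ Real.log (l:ℝ) := Real.log_nonneg hl0
          have h3 : Real.log (l:ℝ) ≤ Real.logb 2 (l:ℝ) := by
            rw [Real.logb, le_div_iff₀ (Real.log_pos (by norm_num))]
            nlinarith [Real.log_two_lt_d9]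
          rw [hddeq]
          calc ∑ k ∈ K, (1:ℝ)/((S k).card : ℝ) ≤ ∑ i ∈ Finset.range K.card, (1:ℝ)/(i+1) :=
                hharm
            _ ≤ 1 + Real.log (K.card : ℝ) := hlog
            _ ≤ 3*(Real.logb 2 (l:ℝ) + 1) := by linarith
      -- final assembly
      calc carvMeasure ε n {p : ℝ × Equiv.Perm (Fin n) |
              ¬ ∃ i, ball x t ∩ M ⊆ carvBlock u p.1 p.2 i}
          ≤ carvMeasure ε n ((((Set.Ioc (ε/4) (ε/2))ᶜ) ×ˢ
              (Set.univ : Set (Equiv.Perm (Fin n)))) ∪ ⋃ k ∈ K, A k) :=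
            measure_mono hEsub
        _ ≤ carvMeasure ε n (((Set.Ioc (ε/4) (ε/2))ᶜ) ×ˢ
              (Set.univ : Set (Equiv.Perm (Fin n)))) + carvMeasure ε n (⋃ k ∈ K, A k) :=
            measure_union_le _ _
        _ ≤ 0 + ∑ k ∈ K, carvMeasure ε n (A k) :=
            add_le_add (le_of_eq hzero) (measure_biUnion_finset_le K A)
        _ = ∑ k ∈ K, carvMeasure ε n (A k) := zero_add _
        _ ≤ ∑ k ∈ K, ENNReal.ofReal (8/β) * ((S k).card : ℝ≥0∞)⁻¹ :=
            Finset.sum_le_sum hAk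
        _ = ENNReal.ofReal (8/β) * ∑ k ∈ K, ((S k).card : ℝ≥0∞)⁻¹ := by
            rw [Finset.mul_sum]
        _ ≤ ENNReal.ofReal (8/β) * ENNReal.ofReal (3*(ddim ↥M ε + 1)) :=
            mul_le_mul_right hsum _
        _ = ENNReal.ofReal ((8/β) * (3*(ddim ↥M ε + 1))) :=
            (ENNReal.ofReal_mul (by positivity)).symm
        _ ≤ ENNReal.ofReal (24 * (ddim ↥M ε + 1) / β) :=
            ENNReal.ofReal_le_ofReal (le_of_eq (by ring))
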